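/- Let d ≥ 1 and L ≥ 2 be integers, and let G be the torus graph on (ZMod L)^d. For distinct vertices u, v, let P(u, v) denote the (finite, nonempty) set of geodesics from u to v, i.e., walks from u to v in G whose length equals dist_G(u, v); for an edge e of G, let N_e(u, v) be the number of geodesics in P(u, v) that traverse e (i.e., whose edge list contains e), and let N(u, v) = |P(u, v)|. Then for any two edges e and e′ of G, the sum over all ordered pairs (u, v) of distinct vertices of N_e(u, v)/N(u, v) equals the sum over all ordered pairs (u, v) of distinct vertices of N_{e′}(u, v)/N(u, v). -/

import Mathlib

/-- The torus graph on `(ZMod L)^d`: distinct vertices `u, v` are adjacent iff there is a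
coordinate `i` with `v = u + Pi.single i 1` or `v = u + Pi.single i (-1)`. -/
def torusGraph (d L : ℕ) : SimpleGraph (Fin d → ZMod L) where
  Adj u v := u ≠ v ∧ ∃ i : Fin d, v = u + Pi.single i 1 ∨ v = u + Pi.single i (-1)
  symm := by
    constructor
    rintro u v ⟨hne, i, h | h⟩
    · exact ⟨hne.symm, i, Or.inr (by simp [h, Pi.single_neg, sub_eq_add_neg])⟩
    · exact ⟨hne.symm, i, Or.inl (by simp [h, Pi.single_neg, sub_eq_add_neg])⟩
  loopless := ⟨fun u h => h.1 rfl⟩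

/-- The number of geodesics (shortest walks) from `u` to `v` in the torus graph. -/
noncomputable def geodesicCount (d L : ℕ) (u v : Fin d → ZMod L) : ℕ :=
  {p : (torusGraph d L).Walk u v | p.length = (torusGraph d L).dist u v}.ncard

/-- The number of geodesics from `u` to `v` in the torus graph that traverse the edge `e`. -/
noncomputable def geodesicCountThrough (d L : ℕ) (u v : Fin d → ZMod L)
    (e : Sym2 (Fin d → ZMod L)) : ℕ :=
  {p : (torusGraph d L).Walk u v |
    p.length = (torusGraph d L).dist u v ∧ e ∈ p.edges}.ncard

section Aux

open SimpleGraph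

variable {d L : ℕ}

/-- An affine "signed permutation + translation" map on the torus. -/
def torusAff (σ : Equiv.Perm (Fin d)) (s c : Fin d → ZMod L) (x : Fin d → ZMod L) :
    Fin d → ZMod L := fun k => c k + s k * x (σ k)

lemma torusAff_add_single (σ : Equiv.Perm (Fin d)) (s c : Fin d → ZMod L)
    (x : Fin d → ZMod L) (m : Fin d) (δ : ZMod L) :
    torusAff σ s c (x + Pi.single m δ) =
      torusAff σ s c x + Pi.single (σ.symm m) (s (σ.symm m) * δ) := by
  funext k
  simp only [torusAff, Pi.add_apply, Pi.single_apply]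
  by_cases h : k = σ.symm m
  · subst h
    simp [Equiv.apply_symm_apply]
    ring
  · have h2 : ¬ σ k = m := fun hh => h (by rw [← hh, Equiv.symm_apply_apply])
    simp [h, h2]

lemma torusAff_left_inv (σ : Equiv.Perm (Fin d)) (s c : Fin d → ZMod L)
    (hs : ∀ k, s k * s k = 1) (x : Fin d → ZMod L) :
    torusAff σ.symm (fun m => s (σ.symm m)) (fun m => -(s (σ.symm m) * c (σ.symm m)))
      (torusAff σ s c x) = x := by
  funext m
  simp only [torusAff, Equiv.symm_symm, Equiv.apply_symm_apply]
  linear_combination x m * hs (σ.symm m)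

lemma torusAff_right_inv (σ : Equiv.Perm (Fin d)) (s c : Fin d → ZMod L)
    (hs : ∀ k, s k * s k = 1) (y : Fin d → ZMod L) :
    torusAff σ s c
      (torusAff σ.symm (fun m => s (σ.symm m)) (fun m => -(s (σ.symm m) * c (σ.symm m))) y)
      = y := by
  funext k
  simp only [torusAff, Equiv.symm_symm, Equiv.symm_apply_apply]
  linear_combination (y k - c k) * hs k

lemma torusAff_injective (σ : Equiv.Perm (Fin d)) (s c : Fin d → ZMod L)
    (hs : ∀ k, s k * s k = 1) : Function.Injective (torusAff σ s c) :=
  Function.LeftInverse.injective (g := torusAff σ.symm (fun m => s (σ.symm m))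
    (fun m => -(s (σ.symm m) * c (σ.symm m)))) (torusAff_left_inv σ s c hs)

lemma sq_one_of_pm (s : ZMod L) (h : s = 1 ∨ s = -1) : s * s = 1 := by
  rcases h with h | h <;> rw [h] <;> ring

lemma torusAff_adj (σ : Equiv.Perm (Fin d)) (s c : Fin d → ZMod L)
    (hs : ∀ k, s k = 1 ∨ s k = -1)
    {x y : Fin d → ZMod L} (h : (torusGraph d L).Adj x y) :
    (torusGraph d L).Adj (torusAff σ s c x) (torusAff σ s c y) := by
  have hinj : Function.Injective (torusAff σ s c) :=
    torusAff_injective σ s c (fun k => sq_one_of_pm _ (hs k))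
  obtain ⟨hne, i, hxy | hxy⟩ := h
  · subst hxy
    refine ⟨hinj.ne hne, σ.symm i, ?_⟩
    rw [torusAff_add_single]
    rcases hs (σ.symm i) with h1 | h1
    · exact Or.inl (by rw [h1, one_mul])
    · exact Or.inr (by rw [h1]; norm_num)
  · subst hxy
    refine ⟨hinj.ne hne, σ.symm i, ?_⟩
    rw [torusAff_add_single]
    rcases hs (σ.symm i) with h1 | h1
    · exact Or.inr (by rw [h1, one_mul])
    · exact Or.inl (by rw [h1]; norm_num)

/-- The graph automorphism of the torus graph given by a signed permutation and translation. -/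
def torusAffIso (σ : Equiv.Perm (Fin d)) (s c : Fin d → ZMod L)
    (hs : ∀ k, s k = 1 ∨ s k = -1) : torusGraph d L ≃g torusGraph d L where
  toFun := torusAff σ s c
  invFun := torusAff σ.symm (fun m => s (σ.symm m)) (fun m => -(s (σ.symm m) * c (σ.symm m)))
  left_inv := torusAff_left_inv σ s c (fun k => sq_one_of_pm _ (hs k))
  right_inv := torusAff_right_inv σ s c (fun k => sq_one_of_pm _ (hs k))
  map_rel_iff' := by
    intro x y
    show (torusGraph d L).Adj (torusAff σ s c x) (torusAff σ s c y) ↔ (torusGraph d L).Adj x y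
    constructor
    · intro h
      have hs' : ∀ m : Fin d, s (σ.symm m) = 1 ∨ s (σ.symm m) = -1 := fun m => hs _
      have h2 := torusAff_adj σ.symm (fun m => s (σ.symm m))
        (fun m => -(s (σ.symm m) * c (σ.symm m))) hs' h
      rwa [torusAff_left_inv σ s c (fun k => sq_one_of_pm _ (hs k)) x,
        torusAff_left_inv σ s c (fun k => sq_one_of_pm _ (hs k)) y] at h2
    · exact torusAff_adj σ s c hs

lemma iso_dist_le {V : Type*} {G : SimpleGraph V} (φ : G ≃g G) (u v : V) :
    G.dist (φ u) (φ v) ≤ G.dist u v := by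
  by_cases h : G.Reachable u v
  · obtain ⟨p, hp⟩ := h.exists_walk_length_eq_dist
    calc G.dist (φ u) (φ v) ≤ (p.map φ.toHom).length := dist_le _
      _ = G.dist u v := by rw [Walk.length_map, hp]
  · have h2 : ¬ G.Reachable (φ u) (φ v) := by
      intro hr
      exact h (by simpa using hr.map φ.symm.toHom)
    rw [dist_eq_zero_of_not_reachable h2, dist_eq_zero_of_not_reachable h]

lemma iso_dist {V : Type*} {G : SimpleGraph V} (φ : G ≃g G) (u v : V) :
    G.dist (φ u) (φ v) = G.dist u v := by
  refine le_antisymm (iso_dist_le φ u v) ?_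
  have := iso_dist_le φ.symm (φ u) (φ v)
  simpa using this

lemma torus_walk_set_finite [NeZero L] (u v : Fin d → ZMod L) (n : ℕ) :
    {p : (torusGraph d L).Walk u v | p.length = n}.Finite := by
  letI : (torusGraph d L).LocallyFinite := fun w => Set.Finite.fintype (Set.toFinite _)
  exact Set.toFinite _

lemma geodesicCountThrough_le [NeZero L] (φ : torusGraph d L ≃g torusGraph d L)
    (u v : Fin d → ZMod L) (e : Sym2 (Fin d → ZMod L)) :
    geodesicCountThrough d L u v e
      ≤ geodesicCountThrough d L (φ u) (φ v) (Sym2.map (⇑φ) e) := by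
  unfold geodesicCountThrough
  have hinj : Function.Injective
      (Walk.map φ.toHom : (torusGraph d L).Walk u v → (torusGraph d L).Walk (φ u) (φ v)) :=
    Walk.map_injective_of_injective (fun a b hab => φ.injective hab) u v
  have hsub : (Walk.map φ.toHom) ''
      {p : (torusGraph d L).Walk u v |
        p.length = (torusGraph d L).dist u v ∧ e ∈ p.edges}
      ⊆ {p : (torusGraph d L).Walk (φ u) (φ v) |
        p.length = (torusGraph d L).dist (φ u) (φ v) ∧ Sym2.map (⇑φ) e ∈ p.edges} := by
    rintro q ⟨p, ⟨hlen, hedge⟩, rfl⟩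
    constructor
    · rw [Walk.length_map, hlen, iso_dist]
    · rw [Walk.edges_map]
      exact List.mem_map_of_mem hedge
  have hfin : {p : (torusGraph d L).Walk (φ u) (φ v) |
      p.length = (torusGraph d L).dist (φ u) (φ v) ∧ Sym2.map (⇑φ) e ∈ p.edges}.Finite :=
    (torus_walk_set_finite (φ u) (φ v) ((torusGraph d L).dist (φ u) (φ v))).subset
      (fun p hp => hp.1)
  calc {p : (torusGraph d L).Walk u v |
        p.length = (torusGraph d L).dist u v ∧ e ∈ p.edges}.ncard
      = ((Walk.map φ.toHom) '' {p : (torusGraph d L).Walk u v |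
          p.length = (torusGraph d L).dist u v ∧ e ∈ p.edges}).ncard :=
        (Set.ncard_image_of_injective _ hinj).symm
    _ ≤ _ := Set.ncard_le_ncard hsub hfin

lemma geodesicCount_le [NeZero L] (φ : torusGraph d L ≃g torusGraph d L)
    (u v : Fin d → ZMod L) :
    geodesicCount d L u v ≤ geodesicCount d L (φ u) (φ v) := by
  unfold geodesicCount
  have hinj : Function.Injective
      (Walk.map φ.toHom : (torusGraph d L).Walk u v → (torusGraph d L).Walk (φ u) (φ v)) :=
    Walk.map_injective_of_injective (fun a b hab => φ.injective hab) u v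
  have hsub : (Walk.map φ.toHom) ''
      {p : (torusGraph d L).Walk u v | p.length = (torusGraph d L).dist u v}
      ⊆ {p : (torusGraph d L).Walk (φ u) (φ v) |
        p.length = (torusGraph d L).dist (φ u) (φ v)} := by
    rintro q ⟨p, hlen, rfl⟩
    have hlen' : p.length = (torusGraph d L).dist u v := hlen
    show (p.map φ.toHom).length = (torusGraph d L).dist (φ u) (φ v)
    rw [Walk.length_map, hlen', iso_dist]
  calc {p : (torusGraph d L).Walk u v | p.length = (torusGraph d L).dist u v}.ncard
      = ((Walk.map φ.toHom) ''
          {p : (torusGraph d L).Walk u v | p.length = (torusGraph d L).dist u v}).ncard :=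
        (Set.ncard_image_of_injective _ hinj).symm
    _ ≤ _ := Set.ncard_le_ncard hsub (torus_walk_set_finite (φ u) (φ v) _)

lemma geodesicCount_iso [NeZero L] (φ : torusGraph d L ≃g torusGraph d L)
    (u v : Fin d → ZMod L) :
    geodesicCount d L (φ u) (φ v) = geodesicCount d L u v := by
  refine le_antisymm ?_ (geodesicCount_le φ u v)
  have h := geodesicCount_le φ.symm (φ u) (φ v)
  rwa [RelIso.symm_apply_apply, RelIso.symm_apply_apply] at h

lemma geodesicCountThrough_iso [NeZero L] (φ : torusGraph d L ≃g torusGraph d L)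
    (u v : Fin d → ZMod L) (e : Sym2 (Fin d → ZMod L)) :
    geodesicCountThrough d L (φ u) (φ v) (Sym2.map (⇑φ) e) = geodesicCountThrough d L u v e := by
  refine le_antisymm ?_ (geodesicCountThrough_le φ u v e)
  have h := geodesicCountThrough_le φ.symm (φ u) (φ v) (Sym2.map (⇑φ) e)
  have hback : Sym2.map (⇑φ.symm) (Sym2.map (⇑φ) e) = e := by
    induction e
    simp
  rwa [RelIso.symm_apply_apply, RelIso.symm_apply_apply, hback] at h

end Aux

theorem torusGraph_flow_edge_symmetric (d L : ℕ) (hd : 1 ≤ d) (hL : 2 ≤ L) [NeZero L]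
    (e e' : Sym2 (Fin d → ZMod L))
    (he : e ∈ (torusGraph d L).edgeSet) (he' : e' ∈ (torusGraph d L).edgeSet) :
    ∑ u : Fin d → ZMod L, ∑ v : Fin d → ZMod L,
        (if u ≠ v then
          (geodesicCountThrough d L u v e : ℝ) / (geodesicCount d L u v : ℝ)
        else 0)
      = ∑ u : Fin d → ZMod L, ∑ v : Fin d → ZMod L,
          (if u ≠ v then
            (geodesicCountThrough d L u v e' : ℝ) / (geodesicCount d L u v : ℝ)
          else 0) := by
  classical
  induction e with
  | _ a b =>
  induction e' with
  | _ a' b' =>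
  rw [SimpleGraph.mem_edgeSet] at he he'
  obtain ⟨i, δ, hδ, hb⟩ : ∃ (i : Fin d) (δ : ZMod L), (δ = 1 ∨ δ = -1) ∧ b = a + Pi.single i δ := by
    rcases he.2 with ⟨i, h | h⟩
    · exact ⟨i, 1, Or.inl rfl, h⟩
    · exact ⟨i, -1, Or.inr rfl, h⟩
  obtain ⟨j, δ', hδ', hb'⟩ : ∃ (j : Fin d) (δ' : ZMod L), (δ' = 1 ∨ δ' = -1) ∧ b' = a' + Pi.single j δ' := by
    rcases he'.2 with ⟨j, h | h⟩
    · exact ⟨j, 1, Or.inl rfl, h⟩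
    · exact ⟨j, -1, Or.inr rfl, h⟩
  set σ : Equiv.Perm (Fin d) := Equiv.swap i j with hσ
  set s : Fin d → ZMod L := fun k => if k = j then δ' * δ else 1 with hsdef
  set c : Fin d → ZMod L := fun k => a' k - s k * a (σ k) with hcdef
  have hs : ∀ k, s k = 1 ∨ s k = -1 := by
    intro k
    by_cases hk : k = j
    · simp only [hsdef, hk, if_pos rfl]
      rcases hδ with h1 | h1 <;> rcases hδ' with h2 | h2 <;> rw [h1, h2]
      · left; ring
      · right; ring
      · right; ring
      · left; ring
    · simp [hsdef, hk]
  set φ : torusGraph d L ≃g torusGraph d L := torusAffIso σ s c hs with hφdef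
  have hφa : φ a = a' := by
    funext k
    show torusAff σ s c a k = a' k
    simp only [torusAff, hcdef]
    ring
  have hφb : φ b = b' := by
    rw [hb, hb']
    show torusAff σ s c (a + Pi.single i δ) = a' + Pi.single j δ'
    rw [torusAff_add_single]
    have hsymm : σ.symm i = j := by
      rw [hσ, Equiv.symm_swap, Equiv.swap_apply_left]
    rw [hsymm]
    have hφa' : torusAff σ s c a = a' := hφa
    rw [hφa']
    congr 1
    have hsj : s j = δ' * δ := by simp [hsdef]
    rw [hsj]
    have hδδ : δ * δ = 1 := by rcases hδ with h | h <;> rw [h] <;> ring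
    have hfin : δ' * δ * δ = δ' := by rw [mul_assoc, hδδ, mul_one]
    rw [hfin]
  have hmape : Sym2.map (⇑φ) s(a, b) = s(a', b') := by
    rw [Sym2.map_pair_eq, hφa, hφb]
  have key : ∀ u v : Fin d → ZMod L,
      (if u ≠ v then
        (geodesicCountThrough d L u v s(a, b) : ℝ) / (geodesicCount d L u v : ℝ)
      else 0)
      = (if φ u ≠ φ v then
          (geodesicCountThrough d L (φ u) (φ v) s(a', b') : ℝ) /
            (geodesicCount d L (φ u) (φ v) : ℝ)
        else 0) := by
    intro u v
    rw [← hmape, geodesicCountThrough_iso φ u v, geodesicCount_iso φ u v]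
    congr 1
    simp [φ.injective.ne_iff]
  calc ∑ u : Fin d → ZMod L, ∑ v : Fin d → ZMod L,
        (if u ≠ v then
          (geodesicCountThrough d L u v s(a, b) : ℝ) / (geodesicCount d L u v : ℝ)
        else 0)
      = ∑ u : Fin d → ZMod L, ∑ v : Fin d → ZMod L,
          (if φ u ≠ φ v then
            (geodesicCountThrough d L (φ u) (φ v) s(a', b') : ℝ) /
              (geodesicCount d L (φ u) (φ v) : ℝ)
          else 0) :=
        Finset.sum_congr rfl fun u _ => Finset.sum_congr rfl fun v _ => key u v
    _ = ∑ u : Fin d → ZMod L, ∑ v : Fin d → ZMod L,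
          (if u ≠ v then
            (geodesicCountThrough d L u v s(a', b') : ℝ) / (geodesicCount d L u v : ℝ)
          else 0) := by
        rw [← Equiv.sum_comp φ.toEquiv (fun u => ∑ v : Fin d → ZMod L,
          (if u ≠ v then
            (geodesicCountThrough d L u v s(a', b') : ℝ) / (geodesicCount d L u v : ℝ)
          else 0))]
        refine Finset.sum_congr rfl fun u _ => ?_
        exact Equiv.sum_comp φ.toEquiv (fun v =>
          (if φ.toEquiv u ≠ v then
            (geodesicCountThrough d L (φ.toEquiv u) v s(a', b') : ℝ) /
              (geodesicCount d L (φ.toEquiv u) v : ℝ)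
          else 0))
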